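/- Let H = p₁² + p₂² + p₃² + V with V(x,y,z) = α(x²+y²+z²) + β/x² + γ/y² + δ/z², and let J₁₂ = (x p₂ − y p₁)² + β y²/x² + γ x²/y². Then {H, J₁₂} = 0 wherever xyz ≠ 0. -/

import Mathlib

open Complex

noncomputable def poissonBracket (F G : ℂ → ℂ → ℂ → ℂ → ℂ → ℂ → ℂ)
    (x y z p q r : ℂ) : ℂ :=
  (deriv (fun t => F t y z p q r) x) * (deriv (fun t => G x y z t q r) p)
    - (deriv (fun t => F x y z t q r) p) * (deriv (fun t => G t y z p q r) x)
    + (deriv (fun t => F x t z p q r) y) * (deriv (fun t => G x y z p t r) q)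
    - (deriv (fun t => F x y z p t r) q) * (deriv (fun t => G x t z p q r) y)
    + (deriv (fun t => F x y t p q r) z) * (deriv (fun t => G x y z p q t) r)
    - (deriv (fun t => F x y z p q t) r) * (deriv (fun t => G x y t p q r) z)

noncomputable def VI (α β γ δ : ℂ) (x y z : ℂ) : ℂ :=
  α * (x ^ 2 + y ^ 2 + z ^ 2) + β / x ^ 2 + γ / y ^ 2 + δ / z ^ 2

set_option maxHeartbeats 2000000 in
theorem stmt1 (α β γ δ : ℂ) :
    ∀ x y z p q r : ℂ, x * y * z ≠ 0 →
      poissonBracket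
        (fun x y z p q r => p ^ 2 + q ^ 2 + r ^ 2 + VI α β γ δ x y z)
        (fun x y _ p q _ =>
          (x * q - y * p) ^ 2 + β * y ^ 2 / x ^ 2 + γ * x ^ 2 / y ^ 2)
        x y z p q r = 0 := by
  intro x y z p q r h
  have hx : x ≠ 0 := fun h' => h (by simp [h'])
  have hy : y ≠ 0 := fun h' => h (by simp [h'])
  have hz : z ≠ 0 := fun h' => h (by simp [h'])
  have hx2 : x ^ 2 ≠ 0 := pow_ne_zero _ hx
  have hy2 : y ^ 2 ≠ 0 := pow_ne_zero _ hy
  have hz2 : z ^ 2 ≠ 0 := pow_ne_zero _ hz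
  have hsq : ∀ a : ℂ, HasDerivAt (fun t : ℂ => t ^ 2) (2 * a) a := fun a => by
    simpa using hasDerivAt_pow 2 a
  simp only [poissonBracket, VI]
  -- H derivatives
  have D1 : deriv (fun t : ℂ => p ^ 2 + q ^ 2 + r ^ 2 +
      (α * (t ^ 2 + y ^ 2 + z ^ 2) + β / t ^ 2 + γ / y ^ 2 + δ / z ^ 2)) x
      = 2 * α * x - 2 * β / x ^ 3 := by
    have hA : HasDerivAt (fun t : ℂ => α * (t ^ 2 + y ^ 2 + z ^ 2)) (α * (2 * x)) x :=
      (((hsq x).add_const _).add_const _).const_mul α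
    have hB : HasDerivAt (fun t : ℂ => β / t ^ 2)
        ((0 * x ^ 2 - β * (2 * x)) / (x ^ 2) ^ 2) x :=
      (hasDerivAt_const x β).div (hsq x) hx2
    have hT := (((hA.add hB).add_const (γ / y ^ 2)).add_const (δ / z ^ 2)).const_add
      (p ^ 2 + q ^ 2 + r ^ 2)
    erw [hT.deriv]; field_simp; ring
  have D3 : deriv (fun t : ℂ => p ^ 2 + q ^ 2 + r ^ 2 +
      (α * (x ^ 2 + t ^ 2 + z ^ 2) + β / x ^ 2 + γ / t ^ 2 + δ / z ^ 2)) y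
      = 2 * α * y - 2 * γ / y ^ 3 := by
    have hA : HasDerivAt (fun t : ℂ => α * (x ^ 2 + t ^ 2 + z ^ 2)) (α * (2 * y)) y :=
      ((((hsq y).const_add (x ^ 2)).add_const _)).const_mul α
    have hB : HasDerivAt (fun t : ℂ => γ / t ^ 2)
        ((0 * y ^ 2 - γ * (2 * y)) / (y ^ 2) ^ 2) y :=
      (hasDerivAt_const y γ).div (hsq y) hy2
    have hT := ((((hA.add_const (β / x ^ 2)).add hB)).add_const (δ / z ^ 2)).const_add
      (p ^ 2 + q ^ 2 + r ^ 2)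
    erw [hT.deriv]; field_simp; ring
  have D5 : deriv (fun t : ℂ => p ^ 2 + q ^ 2 + r ^ 2 +
      (α * (x ^ 2 + y ^ 2 + t ^ 2) + β / x ^ 2 + γ / y ^ 2 + δ / t ^ 2)) z
      = 2 * α * z - 2 * δ / z ^ 3 := by
    have hA : HasDerivAt (fun t : ℂ => α * (x ^ 2 + y ^ 2 + t ^ 2)) (α * (2 * z)) z :=
      ((hsq z).const_add (x ^ 2 + y ^ 2)).const_mul α
    have hB : HasDerivAt (fun t : ℂ => δ / t ^ 2)
        ((0 * z ^ 2 - δ * (2 * z)) / (z ^ 2) ^ 2) z :=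
      (hasDerivAt_const z δ).div (hsq z) hz2
    have hT := (((hA.add_const (β / x ^ 2)).add_const (γ / y ^ 2)).add hB).const_add
      (p ^ 2 + q ^ 2 + r ^ 2)
    erw [hT.deriv]; field_simp; ring
  have Dp : deriv (fun t : ℂ => t ^ 2 + q ^ 2 + r ^ 2 +
      (α * (x ^ 2 + y ^ 2 + z ^ 2) + β / x ^ 2 + γ / y ^ 2 + δ / z ^ 2)) p = 2 * p := by
    have hT := (((hsq p).add_const (q ^ 2)).add_const (r ^ 2)).add_const
      (α * (x ^ 2 + y ^ 2 + z ^ 2) + β / x ^ 2 + γ / y ^ 2 + δ / z ^ 2)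
    exact hT.deriv
  have Dq : deriv (fun t : ℂ => p ^ 2 + t ^ 2 + r ^ 2 +
      (α * (x ^ 2 + y ^ 2 + z ^ 2) + β / x ^ 2 + γ / y ^ 2 + δ / z ^ 2)) q = 2 * q := by
    have hT := ((((hsq q).const_add (p ^ 2)).add_const (r ^ 2))).add_const
      (α * (x ^ 2 + y ^ 2 + z ^ 2) + β / x ^ 2 + γ / y ^ 2 + δ / z ^ 2)
    exact hT.deriv
  have Dr : deriv (fun t : ℂ => p ^ 2 + q ^ 2 + t ^ 2 +
      (α * (x ^ 2 + y ^ 2 + z ^ 2) + β / x ^ 2 + γ / y ^ 2 + δ / z ^ 2)) r = 2 * r := by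
    have hT := (((hsq r).const_add (p ^ 2 + q ^ 2))).add_const
      (α * (x ^ 2 + y ^ 2 + z ^ 2) + β / x ^ 2 + γ / y ^ 2 + δ / z ^ 2)
    exact hT.deriv
  -- J derivatives
  have E1 : deriv (fun t : ℂ => (t * q - y * p) ^ 2 + β * y ^ 2 / t ^ 2 + γ * t ^ 2 / y ^ 2) x
      = 2 * (x * q - y * p) * q - 2 * β * y ^ 2 / x ^ 3 + 2 * γ * x / y ^ 2 := by
    have hlin : HasDerivAt (fun t : ℂ => t * q - y * p) (1 * q) x :=
      ((hasDerivAt_id x).mul_const q).sub_const (y * p)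
    have hsqr : HasDerivAt (fun t : ℂ => (t * q - y * p) ^ 2)
        ((2 : ℕ) * (x * q - y * p) ^ 1 * (1 * q)) x := hlin.pow 2
    have hB : HasDerivAt (fun t : ℂ => β * y ^ 2 / t ^ 2)
        ((0 * x ^ 2 - β * y ^ 2 * (2 * x)) / (x ^ 2) ^ 2) x :=
      (hasDerivAt_const x (β * y ^ 2)).div (hsq x) hx2
    have hC : HasDerivAt (fun t : ℂ => γ * t ^ 2 / y ^ 2) (γ * (2 * x) / y ^ 2) x :=
      ((hsq x).const_mul γ).div_const (y ^ 2)
    have hT := (hsqr.add hB).add hC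
    erw [hT.deriv]; field_simp; ring
  have E2 : deriv (fun t : ℂ => (x * q - y * t) ^ 2 + β * y ^ 2 / x ^ 2 + γ * x ^ 2 / y ^ 2) p
      = -2 * (x * q - y * p) * y := by
    have hlin : HasDerivAt (fun t : ℂ => x * q - y * t) (0 - y * 1) p :=
      (hasDerivAt_const p (x * q)).sub ((hasDerivAt_id p).const_mul y)
    have hT := ((hlin.pow 2).add_const (β * y ^ 2 / x ^ 2)).add_const (γ * x ^ 2 / y ^ 2)
    erw [hT.deriv]; push_cast; ring
  have E3 : deriv (fun t : ℂ => (x * t - y * p) ^ 2 + β * y ^ 2 / x ^ 2 + γ * x ^ 2 / y ^ 2) q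
      = 2 * (x * q - y * p) * x := by
    have hlin : HasDerivAt (fun t : ℂ => x * t - y * p) (x * 1) q :=
      ((hasDerivAt_id q).const_mul x).sub_const (y * p)
    have hT := ((hlin.pow 2).add_const (β * y ^ 2 / x ^ 2)).add_const (γ * x ^ 2 / y ^ 2)
    erw [hT.deriv]; push_cast; ring
  have E4 : deriv (fun t : ℂ => (x * q - t * p) ^ 2 + β * t ^ 2 / x ^ 2 + γ * x ^ 2 / t ^ 2) y
      = -2 * (x * q - y * p) * p + 2 * β * y / x ^ 2 - 2 * γ * x ^ 2 / y ^ 3 := by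
    have hlin : HasDerivAt (fun t : ℂ => x * q - t * p) (0 - 1 * p) y :=
      (hasDerivAt_const y (x * q)).sub ((hasDerivAt_id y).mul_const p)
    have hB : HasDerivAt (fun t : ℂ => β * t ^ 2 / x ^ 2) (β * (2 * y) / x ^ 2) y :=
      ((hsq y).const_mul β).div_const (x ^ 2)
    have hC : HasDerivAt (fun t : ℂ => γ * x ^ 2 / t ^ 2)
        ((0 * y ^ 2 - γ * x ^ 2 * (2 * y)) / (y ^ 2) ^ 2) y :=
      (hasDerivAt_const y (γ * x ^ 2)).div (hsq y) hy2
    have hT := ((hlin.pow 2).add hB).add hC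
    erw [hT.deriv]; field_simp; ring
  have E5 : deriv (fun _ : ℂ => (x * q - y * p) ^ 2 + β * y ^ 2 / x ^ 2 + γ * x ^ 2 / y ^ 2) r
      = 0 := deriv_const _ _
  have E6 : deriv (fun _ : ℂ => (x * q - y * p) ^ 2 + β * y ^ 2 / x ^ 2 + γ * x ^ 2 / y ^ 2) z
      = 0 := deriv_const _ _
  rw [D1, D3, D5, Dp, Dq, Dr, E1, E2, E3, E4, E5, E6]
  ring_nf
  field_simp
  ring
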